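/- Let Ω be a finite list of rules of TRC containing no σ-rule (only atomic, replicative, decreasing and modal rules). For all modal trees T, S: if T rewrites to S by finitely many σ-steps followed by applying the rules of Ω in order, then T rewrites to S by applying the rules of Ω in order followed by finitely many σ-steps. -/

import Mathlib

namespace TRC

/-- Strictly positive formulas of `L⁺`. -/
inductive SPF : Type where
  | top : SPF
  | var : ℕ → SPF
  | dia : ℕ → SPF → SPF
  | and : SPF → SPF → SPF

/-- The sequent system `K⁺`. -/
inductive KPlus : SPF → SPF → Prop where
  | id (φ) : KPlus φ φ
  | topI (φ) : KPlus φ .top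
  | cut {φ ψ χ} : KPlus φ ψ → KPlus ψ χ → KPlus φ χ
  | andE₁ (φ ψ) : KPlus (.and φ ψ) φ
  | andE₂ (φ ψ) : KPlus (.and φ ψ) ψ
  | andI {φ ψ χ} : KPlus φ ψ → KPlus φ χ → KPlus φ (.and ψ χ)
  | dist {φ ψ} (α) : KPlus φ ψ → KPlus (.dia α φ) (.dia α ψ)

/-- The Reflection Calculus `RC`. -/
inductive RC : SPF → SPF → Prop where
  | id (φ) : RC φ φ
  | topI (φ) : RC φ .top
  | cut {φ ψ χ} : RC φ ψ → RC ψ χ → RC φ χ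
  | andE₁ (φ ψ) : RC (.and φ ψ) φ
  | andE₂ (φ ψ) : RC (.and φ ψ) ψ
  | andI {φ ψ χ} : RC φ ψ → RC φ χ → RC φ (.and ψ χ)
  | dist {φ ψ} (α) : RC φ ψ → RC (.dia α φ) (.dia α ψ)
  | trans (α φ) : RC (.dia α (.dia α φ)) (.dia α φ)
  | mono {α β} (φ) : β < α → RC (.dia α φ) (.dia β φ)
  | jax {α β} (φ ψ) : β < α → RC (.and (.dia α φ) (.dia β ψ)) (.dia α (.and φ (.dia β ψ)))

/-- Modal depth. -/
def SPF.md : SPF → ℕ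
  | .top => 0
  | .var _ => 0
  | .dia _ φ => φ.md + 1
  | .and φ ψ => max φ.md ψ.md

/-- Modal trees. -/
inductive MTree : Type where
  | node : List ℕ → List (ℕ × MTree) → MTree

/-- Sum of modal trees. -/
def MTree.sum : MTree → MTree → MTree
  | .node Δ₁ Γ₁, .node Δ₂ Γ₂ => .node (Δ₁ ++ Δ₂) (Γ₁ ++ Γ₂)

mutual
/-- Height of a modal tree. -/
def MTree.height : MTree → ℕ
  | .node _ Γ => heightL Γ
def heightL : List (ℕ × MTree) → ℕ
  | [] => 0
  | (_, S) :: Γ => max (S.height + 1) (heightL Γ)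
end

mutual
/-- `T.IsPos k`: the (1-indexed) string `k` is a position of `T`. -/
def MTree.IsPos : MTree → List ℕ → Prop
  | _, [] => True
  | .node _ Γ, i :: k => isPosL Γ i k
def isPosL : List (ℕ × MTree) → ℕ → List ℕ → Prop
  | [], _, _ => False
  | _ :: _, 0, _ => False
  | (_, S) :: _, 1, k => S.IsPos k
  | _ :: Γ, n+2, k => isPosL Γ (n+1) k
end

mutual
/-- Subtree of `T` at position `k` (returning a default junk value off positions). -/
def MTree.subtree : MTree → List ℕ → MTree
  | T, [] => T
  | .node Δ Γ, i :: k => subtreeL (.node Δ Γ) Γ i k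
def subtreeL : MTree → List (ℕ × MTree) → ℕ → List ℕ → MTree
  | d, [], _, _ => d
  | d, _ :: _, 0, _ => d
  | _, (_, S) :: _, 1, k => S.subtree k
  | d, _ :: Γ, n+2, k => subtreeL d Γ (n+1) k
end

mutual
/-- `T.replace S k`: replace the subtree of `T` at position `k` by `S`. -/
def MTree.replace : MTree → MTree → List ℕ → MTree
  | _, S, [] => S
  | .node Δ Γ, S, i :: k => .node Δ (replaceL Γ S i k)
def replaceL : List (ℕ × MTree) → MTree → ℕ → List ℕ → List (ℕ × MTree)
  | [], _, _, _ => []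
  | Γ, _, 0, _ => Γ
  | (α, C) :: Γ, S, 1, k => (α, C.replace S k) :: Γ
  | x :: Γ, S, n+2, k => x :: replaceL Γ S (n+1) k
end

/-- Names of the eight rewriting rules of TRC. -/
inductive Rule : Type where
  | rhoP | rhoM | sigma | piP | piM | four | lam | jay
  deriving DecidableEq

/-- One rewriting step performed at the root. -/
inductive RootStep : Rule → MTree → MTree → Prop where
  | rhoP {Δ Γ i p} (hi : 1 ≤ i) (h : Δ[i-1]? = some p) :
      RootStep .rhoP (.node Δ Γ) (.node (p :: Δ) Γ)
  | rhoM {Δ Γ i} (hi : 1 ≤ i) (h : i - 1 < Δ.length) :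
      RootStep .rhoM (.node Δ Γ) (.node (Δ.eraseIdx (i-1)) Γ)
  | sigma {Δ Γ i j x y} (hi : 1 ≤ i) (hj : 1 ≤ j) (hij : i ≠ j)
      (hx : Γ[i-1]? = some x) (hy : Γ[j-1]? = some y) :
      RootStep .sigma (.node Δ Γ) (.node Δ ((Γ.set (j-1) x).set (i-1) y))
  | piP {Δ Γ i x} (hi : 1 ≤ i) (hx : Γ[i-1]? = some x) :
      RootStep .piP (.node Δ Γ) (.node Δ (x :: Γ))
  | piM {Δ Γ i} (hi : 1 ≤ i) (h : i - 1 < Γ.length) :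
      RootStep .piM (.node Δ Γ) (.node Δ (Γ.eraseIdx (i-1)))
  | four {Δ Γ i j β Δt Γt S} (hi : 1 ≤ i) (hj : 1 ≤ j)
      (hΓ : Γ[i-1]? = some (β, MTree.node Δt Γt)) (hΓt : Γt[j-1]? = some (β, S)) :
      RootStep .four (.node Δ Γ) (.node Δ (Γ.set (i-1) (β, S)))
  | lam {Δ Γ i α β S} (hi : 1 ≤ i) (hβ : β < α) (hΓ : Γ[i-1]? = some (α, S)) :
      RootStep .lam (.node Δ Γ) (.node Δ (Γ.set (i-1) (β, S)))
  | jay {Δ Γ i j α β Δt Γt S} (hi : 1 ≤ i) (hj : 1 ≤ j) (hij : i ≠ j) (hβ : β < α)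
      (hΓi : Γ[i-1]? = some (α, MTree.node Δt Γt)) (hΓj : Γ[j-1]? = some (β, S)) :
      RootStep .jay (.node Δ Γ)
        (.node Δ ((Γ.set (i-1) (α, MTree.node Δt (Γt ++ [(β, S)]))).eraseIdx (j-1)))

/-- One step of the rule `r`, applied at some position. -/
def StepR (r : Rule) (T T' : MTree) : Prop :=
  ∃ k S, T.IsPos k ∧ RootStep r (T.subtree k) S ∧ T' = T.replace S k

/-- One step of the rewriting relation `↪`. -/
def Step (T T' : MTree) : Prop := ∃ r, StepR r T T'

/-- The rewriting relation `↪*`. -/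
def Steps : MTree → MTree → Prop := Relation.ReflTransGen Step

/-- TRC-equivalence `↔*`. -/
def TEquiv (T T' : MTree) : Prop := Steps T T' ∧ Steps T' T

/-- `T ↪^Ω S` : rewriting applying the rules of `Ω` in order, one step each. -/
inductive StepsOf : List Rule → MTree → MTree → Prop where
  | nil (T) : StepsOf [] T T
  | cons {r Ω T U S} : StepR r T U → StepsOf Ω U S → StepsOf (r :: Ω) T S

def AtomicStep (T S : MTree) : Prop := StepR .rhoP T S ∨ StepR .rhoM T S
def DecreasingStep (T S : MTree) : Prop := StepR .piM T S ∨ StepR .four T S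
def ModalStep (T S : MTree) : Prop := StepR .lam T S ∨ StepR .jay T S

/-- Finite conjunctions (empty conjunction is `⊤`). -/
def bigAnd : List SPF → SPF
  | [] => .top
  | φ :: l => .and φ (bigAnd l)

mutual
/-- The embedding `ℱ` of modal trees into formulas. -/
def MTree.toFormula : MTree → SPF
  | .node Δ Γ => .and (bigAnd (Δ.map SPF.var)) (diamL Γ)
def diamL : List (ℕ × MTree) → SPF
  | [] => .top
  | (α, S) :: Γ => .and (.dia α S.toFormula) (diamL Γ)
end

/-- The embedding `𝒯` of formulas into modal trees. -/
def SPF.toTree : SPF → MTree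
  | .top => .node [] []
  | .var p => .node [p] []
  | .dia α φ => .node [] [(α, φ.toTree)]
  | .and φ ψ => φ.toTree.sum ψ.toTree

/-- Nonempty conjunction `φ₁ ∧ (φ₂ ∧ (… ∧ φₙ))`. -/
def conjNE : SPF → List SPF → SPF
  | φ, [] => φ
  | φ, ψ :: l => .and φ (conjNE ψ l)

end TRC

namespace TRC

private lemma perm_cons_eraseIdx {α : Type*} {l : List α} {n : ℕ} {x : α}
    (h : l[n]? = some x) : l.Perm (x :: l.eraseIdx n) := by
  induction l generalizing n with
  | nil => simp at h
  | cons a t ih =>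
    cases n with
    | zero => simp_all
    | succ m =>
      simp only [List.getElem?_cons_succ] at h
      have h2 := (ih h).cons a
      simpa [List.eraseIdx] using h2.trans (List.Perm.swap x a _)

private lemma perm_eraseIdx_of_perm {α : Type*} {l l' : List α} {a b : ℕ} {x : α}
    (hp : l.Perm l') (ha : l[a]? = some x) (hb : l'[b]? = some x) :
    (l.eraseIdx a).Perm (l'.eraseIdx b) :=
  ((perm_cons_eraseIdx ha).symm.trans (hp.trans (perm_cons_eraseIdx hb))).cons_inv

private lemma eraseIdx_set_self {α : Type*} (l : List α) (n : ℕ) (a : α) :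
    (l.set n a).eraseIdx n = l.eraseIdx n := by
  apply List.ext_getElem?
  intro m
  by_cases hm : m < n
  · simp [List.getElem?_eraseIdx, hm, List.getElem?_set_ne (by omega : n ≠ m)]
  · simp [List.getElem?_eraseIdx, hm, List.getElem?_set_ne (by omega : n ≠ m + 1)]

private lemma eraseIdx_set_ne {α : Type*} (l : List α) {q p : ℕ} (h : q ≠ p)
    (hq : q < l.length) (hp : p < l.length) (e : α) :
    (l.set q e).eraseIdx p = (l.eraseIdx p).set (if q < p then q else q - 1) e := by
  apply List.ext_getElem?
  intro m
  simp only [List.getElem?_eraseIdx, List.getElem?_set, List.length_set, List.length_eraseIdx]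
  split_ifs <;> first | rfl | omega

private lemma set_getElem?_self {α : Type*} {l : List α} {q : ℕ} {a : α}
    (h : l[q]? = some a) : l.set q a = l := by
  apply List.ext_getElem?
  intro m
  rcases eq_or_ne q m with rfl | hm
  · rw [h, List.getElem?_set_self]
    exact (List.getElem?_eq_some_iff.1 h).1
  · exact List.getElem?_set_ne hm

private lemma perm_set {α : Type*} {l : List α} {n : ℕ} (h : n < l.length) (a : α) :
    (l.set n a).Perm (a :: l.eraseIdx n) := by
  have h1 : (l.set n a)[n]? = some a := List.getElem?_set_self (by simpa using h)
  have := perm_cons_eraseIdx h1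
  rwa [eraseIdx_set_self] at this

private lemma swap_perm {α : Type*} {Γ : List α} {I J : ℕ} {x y : α}
    (hx : Γ[I]? = some x) (hy : Γ[J]? = some y) (hIJ : I ≠ J) :
    ((Γ.set J x).set I y).Perm Γ := by
  have hI : I < Γ.length := (List.getElem?_eq_some_iff.1 hx).1
  have hJ : J < Γ.length := (List.getElem?_eq_some_iff.1 hy).1
  set J' := if J < I then J else J - 1 with hJ'def
  have hrange : (J < I ∧ J' = J) ∨ (I < J ∧ J' = J - 1) := by
    simp only [hJ'def]; split_ifs <;> omega
  have hlen : (Γ.eraseIdx I).length = Γ.length - 1 := by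
    rw [List.length_eraseIdx]; simp [hI]
  have h2 : ((Γ.set J x).set I y).Perm (y :: (Γ.eraseIdx I).set J' x) := by
    have := perm_set (l := Γ.set J x) (n := I) (by simpa using hI) y
    rwa [eraseIdx_set_ne Γ hIJ.symm hJ hI] at this
  have hJ'get : (Γ.eraseIdx I)[J']? = some y := by
    rw [List.getElem?_eraseIdx]
    split_ifs with hc
    · rwa [show J' = J by omega]
    · rw [show J' + 1 = J by omega]; exact hy
  have hJ'lt : J' < (Γ.eraseIdx I).length := by omega
  have h3 : ((Γ.eraseIdx I).set J' x).Perm (x :: (Γ.eraseIdx I).eraseIdx J') :=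
    perm_set hJ'lt x
  have h4 : Γ.Perm (x :: Γ.eraseIdx I) := perm_cons_eraseIdx hx
  have h5 : (Γ.eraseIdx I).Perm (y :: (Γ.eraseIdx I).eraseIdx J') := perm_cons_eraseIdx hJ'get
  exact h2.trans ((h3.cons y).trans ((List.Perm.swap x y _).trans
    ((h5.cons x).symm.trans h4.symm)))


mutual
private def msize : MTree → ℕ
  | .node _ Γ => msizeL Γ + 1
private def msizeL : List (ℕ × MTree) → ℕ
  | [] => 0
  | (_, S) :: Γ => msize S + msizeL Γ
end

private lemma msize_pos (T : MTree) : 1 ≤ msize T := by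
  cases T; simp [msize]

private lemma msize_lt {Γ : List (ℕ × MTree)} {n : ℕ} {e : ℕ × MTree}
    (h : Γ[n]? = some e) (Δ : List ℕ) : msize e.2 < msize (MTree.node Δ Γ) := by
  induction Γ generalizing n with
  | nil => simp at h
  | cons a t ih =>
    obtain ⟨α, S⟩ := a
    cases n with
    | zero =>
      simp only [List.getElem?_cons_zero, Option.some_inj] at h
      subst h
      simp [msize, msizeL]
    | succ m =>
      simp only [List.getElem?_cons_succ] at h
      have h2 := ih h
      simp only [msize, msizeL] at h2 ⊢
      omega

private lemma isPosL_iff (Γ : List (ℕ × MTree)) (i : ℕ) (k : List ℕ) :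
    isPosL Γ i k ↔ 1 ≤ i ∧ ∃ e, Γ[i-1]? = some e ∧ e.2.IsPos k := by
  induction Γ generalizing i with
  | nil => simp [isPosL]
  | cons a t ih =>
    obtain ⟨α, S⟩ := a
    cases i with
    | zero => simp [isPosL]
    | succ i0 =>
      cases i0 with
      | zero => simp [isPosL]
      | succ n =>
        rw [show isPosL ((α,S)::t) (n+2) k = isPosL t (n+1) k from rfl, ih]
        simp only [show n+2-1 = n+1 from rfl, show n+1-1 = n from rfl,
          List.getElem?_cons_succ]
        constructor <;> rintro ⟨_, h2⟩ <;> exact ⟨by omega, h2⟩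

private lemma subtreeL_eq (d : MTree) (Γ : List (ℕ × MTree)) (i : ℕ) (k : List ℕ)
    (e : ℕ × MTree) (h : Γ[i-1]? = some e) (hi : 1 ≤ i) :
    subtreeL d Γ i k = e.2.subtree k := by
  induction Γ generalizing i with
  | nil => simp at h
  | cons a t ih =>
    obtain ⟨α, S⟩ := a
    cases i with
    | zero => omega
    | succ i0 =>
      cases i0 with
      | zero =>
        simp only [show (0:ℕ)+1-1 = 0 from rfl, List.getElem?_cons_zero, Option.some_inj] at h
        subst h
        rfl
      | succ n =>
        have h' : t[(n+1)-1]? = some e := by simpa using h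
        rw [show subtreeL d ((α,S)::t) (n+2) k = subtreeL d t (n+1) k from rfl,
          ih (n+1) h' (by omega)]

private lemma replaceL_eq (Γ : List (ℕ × MTree)) (V : MTree) (i : ℕ) (k : List ℕ)
    {α : ℕ} {C : MTree} (h : Γ[i-1]? = some (α, C)) (hi : 1 ≤ i) :
    replaceL Γ V i k = Γ.set (i-1) (α, C.replace V k) := by
  induction Γ generalizing i with
  | nil => simp at h
  | cons a t ih =>
    obtain ⟨α', S⟩ := a
    cases i with
    | zero => omega
    | succ i0 =>
      cases i0 with
      | zero =>
        simp only [show (0:ℕ)+1-1 = 0 from rfl, List.getElem?_cons_zero, Option.some_inj,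
          Prod.mk.injEq] at h
        obtain ⟨rfl, rfl⟩ := h
        rfl
      | succ n =>
        have h' : t[(n+1)-1]? = some (α, C) := by simpa using h
        rw [show replaceL ((α',S)::t) V (n+2) k = (α',S) :: replaceL t V (n+1) k from rfl,
          ih (n+1) h' (by omega)]
        rfl

private lemma stepR_child {r : Rule} {Δ : List ℕ} {Γ : List (ℕ × MTree)} {n : ℕ}
    {rest : List ℕ} {W : MTree}
    (hpos : MTree.IsPos (.node Δ Γ) (n :: rest))
    (hroot : RootStep r ((MTree.node Δ Γ).subtree (n :: rest)) W) :
    ∃ α C, 1 ≤ n ∧ Γ[n-1]? = some (α, C) ∧ StepR r C (C.replace W rest) ∧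
      (MTree.node Δ Γ).replace W (n :: rest) = .node Δ (Γ.set (n-1) (α, C.replace W rest)) := by
  have hp : isPosL Γ n rest := hpos
  rw [isPosL_iff] at hp
  obtain ⟨hn, ⟨α, C⟩, hget, hCpos⟩ := hp
  have hsub : (MTree.node Δ Γ).subtree (n :: rest) = C.subtree rest := by
    rw [show (MTree.node Δ Γ).subtree (n :: rest) = subtreeL (.node Δ Γ) Γ n rest from rfl]
    exact subtreeL_eq _ _ _ _ (α, C) hget hn
  refine ⟨α, C, hn, hget, ⟨rest, W, hCpos, by rwa [hsub] at hroot, rfl⟩, ?_⟩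
  rw [show (MTree.node Δ Γ).replace W (n :: rest) = .node Δ (replaceL Γ W n rest) from rfl,
    replaceL_eq _ _ _ _ hget hn]

private lemma stepR_set {r : Rule} {C C' : MTree} (h : StepR r C C') (Δ : List ℕ)
    {Γ : List (ℕ × MTree)} {q : ℕ} {α : ℕ} (hq : Γ[q]? = some (α, C)) :
    StepR r (.node Δ Γ) (.node Δ (Γ.set q (α, C'))) := by
  obtain ⟨k, V, hpos, hroot, rfl⟩ := h
  refine ⟨(q+1) :: k, V, ?_, ?_, ?_⟩
  · show isPosL Γ (q+1) k
    rw [isPosL_iff]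
    exact ⟨by omega, ⟨(α, C), by simpa using hq, hpos⟩⟩
  · rw [show (MTree.node Δ Γ).subtree ((q+1) :: k) = subtreeL (.node Δ Γ) Γ (q+1) k from rfl,
      subtreeL_eq _ _ _ _ (α, C) (by simpa using hq) (by omega)]
    exact hroot
  · rw [show (MTree.node Δ Γ).replace V ((q+1) :: k) = .node Δ (replaceL Γ V (q+1) k) from rfl,
      replaceL_eq _ _ _ _ (by simpa using hq) (by omega)]
    simp

private lemma sigmaStar_set {C C' : MTree} (h : Relation.ReflTransGen (StepR .sigma) C C')
    (Δ : List ℕ) {Γ : List (ℕ × MTree)} {q : ℕ} {α : ℕ} (hq : Γ[q]? = some (α, C)) :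
    Relation.ReflTransGen (StepR .sigma) (.node Δ Γ) (.node Δ (Γ.set q (α, C'))) := by
  have hqlen : q < Γ.length := (List.getElem?_eq_some_iff.1 hq).1
  induction h with
  | refl => rw [set_getElem?_self hq]
  | tail _ hstep ih =>
    rename_i D E _
    refine ih.tail ?_
    have hD : (Γ.set q (α, D))[q]? = some (α, D) := List.getElem?_set_self (by simpa using hqlen)
    have := stepR_set hstep Δ hD
    rwa [List.set_set] at this

private lemma stepR_of_root {r : Rule} {Δ : List ℕ} {Γ : List (ℕ × MTree)} {V : MTree}
    (h : RootStep r (.node Δ Γ) V) : StepR r (.node Δ Γ) V :=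
  ⟨[], V, trivial, h, rfl⟩

private lemma rootStep_sigma_cons {Δ : List ℕ} {Γ Γ' : List (ℕ × MTree)} (a : ℕ × MTree)
    (h : RootStep .sigma (.node Δ Γ) (.node Δ Γ')) :
    RootStep .sigma (.node Δ (a :: Γ)) (.node Δ (a :: Γ')) := by
  cases h with
  | sigma hi hj hij hx hy =>
    rename_i i j x y
    obtain ⟨i', rfl⟩ : ∃ i', i = i' + 1 := ⟨i - 1, by omega⟩
    obtain ⟨j', rfl⟩ : ∃ j', j = j' + 1 := ⟨j - 1, by omega⟩
    simp only [Nat.add_sub_cancel] at hx hy ⊢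
    have := RootStep.sigma (Δ := Δ) (Γ := a :: Γ) (i := i' + 2) (j := j' + 2) (x := x) (y := y)
      (by omega) (by omega) (by omega) (by simpa using hx) (by simpa using hy)
    simpa using this

private lemma sigmaStar_perm {Γ Γ' : List (ℕ × MTree)} (h : Γ.Perm Γ') (Δ : List ℕ) :
    Relation.ReflTransGen (StepR .sigma) (.node Δ Γ) (.node Δ Γ') := by
  have key : Relation.ReflTransGen
      (fun L L' => RootStep .sigma (MTree.node Δ L) (.node Δ L')) Γ Γ' := by
    induction h with
    | nil => exact .refl
    | cons a _ ih => exact ih.lift (p := fun L L' => RootStep .sigma (MTree.node Δ L) (.node Δ L')) _ (fun L L' hs => rootStep_sigma_cons a hs)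
    | swap x y l =>
      refine .single ?_
      have := RootStep.sigma (Δ := Δ) (Γ := y :: x :: l) (i := 1) (j := 2) (x := y) (y := x)
        (by omega) (by omega) (by omega) (by simp) (by simp)
      simpa using this
    | trans _ _ ih1 ih2 => exact ih1.trans ih2
  exact key.lift (MTree.node Δ) (fun L L' hs => stepR_of_root hs)

private def swIdx (I J p : ℕ) : ℕ := if p = I then J else if p = J then I else p

private lemma getElem?_swap {Γ : List (ℕ × MTree)} {I J : ℕ} {x y : ℕ × MTree}
    (hx : Γ[I]? = some x) (hy : Γ[J]? = some y) (hIJ : I ≠ J) (p : ℕ) :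
    ((Γ.set J x).set I y)[p]? = Γ[swIdx I J p]? := by
  have hI : I < Γ.length := (List.getElem?_eq_some_iff.1 hx).1
  have hJ : J < Γ.length := (List.getElem?_eq_some_iff.1 hy).1
  unfold swIdx
  by_cases h1 : p = I
  · subst h1
    rw [List.getElem?_set_self (by simpa using hI), if_pos rfl, hy]
  · rw [List.getElem?_set_ne (by omega), if_neg h1]
    by_cases h2 : p = J
    · subst h2
      rw [List.getElem?_set_self hJ, if_pos rfl, hx]
    · rw [List.getElem?_set_ne (by omega), if_neg h2]

private lemma swIdx_lt {Γ : List (ℕ × MTree)} {I J : ℕ} (hI : I < Γ.length)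
    (hJ : J < Γ.length) {p : ℕ} (hp : p < Γ.length) : swIdx I J p < Γ.length := by
  unfold swIdx; split_ifs <;> omega

private lemma rootStep_swap_set (Δ : List ℕ) {Γ : List (ℕ × MTree)} {I J : ℕ}
    {x y : ℕ × MTree} (hx : Γ[I]? = some x) (hy : Γ[J]? = some y) (hIJ : I ≠ J)
    (p : ℕ) (hp : p < Γ.length) (X : ℕ × MTree) :
    RootStep .sigma (.node Δ (Γ.set (swIdx I J p) X))
      (.node Δ (((Γ.set J x).set I y).set p X)) := by
  have hI : I < Γ.length := (List.getElem?_eq_some_iff.1 hx).1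
  have hJ : J < Γ.length := (List.getElem?_eq_some_iff.1 hy).1
  set L := Γ.set (swIdx I J p) X with hL
  have hlenL : L.length = Γ.length := by simp [hL]
  obtain ⟨x', hx'⟩ : ∃ x', L[I]? = some x' := by
    have : I < L.length := by omega
    exact ⟨L[I], List.getElem?_eq_some_iff.2 ⟨this, rfl⟩⟩
  obtain ⟨y', hy'⟩ : ∃ y', L[J]? = some y' := by
    have : J < L.length := by omega
    exact ⟨L[J], List.getElem?_eq_some_iff.2 ⟨this, rfl⟩⟩
  have hstep := RootStep.sigma (Δ := Δ) (Γ := L) (i := I + 1) (j := J + 1) (x := x') (y := y')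
    (by omega) (by omega) (by omega) (by simpa using hx') (by simpa using hy')
  simp only [Nat.add_sub_cancel] at hstep
  have heq : (L.set J x').set I y' = ((Γ.set J x).set I y).set p X := by
    apply List.ext_getElem?
    intro m
    have e1 := getElem?_swap hx hy hIJ
    simp only [List.getElem?_set, List.length_set, hL] at *
    unfold swIdx at *
    split_ifs at hx' hy' ⊢ <;> simp_all <;> omega
  rwa [heq] at hstep

private lemma sigmaStar_set_eraseIdx {Δ : List ℕ} {Γ : List (ℕ × MTree)} {ap bp : ℕ}
    (hab : ap ≠ bp) (ha : ap < Γ.length) (hb : bp < Γ.length) {α : ℕ} {C C' : MTree}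
    (h : Relation.ReflTransGen (StepR .sigma) C C') :
    Relation.ReflTransGen (StepR .sigma)
      (.node Δ ((Γ.set ap (α, C)).eraseIdx bp)) (.node Δ ((Γ.set ap (α, C')).eraseIdx bp)) := by
  set aq := if ap < bp then ap else ap - 1 with haq
  have hrange : (ap < bp ∧ aq = ap) ∨ (bp < ap ∧ aq = ap - 1) := by
    simp only [haq]; split_ifs <;> omega
  have h1 : ((Γ.set ap (α, C)).eraseIdx bp)[aq]? = some (α, C) := by
    rw [List.getElem?_eraseIdx]
    split_ifs with hc
    · rw [show aq = ap by omega]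
      exact List.getElem?_set_self ha
    · rw [show aq + 1 = ap by omega]
      exact List.getElem?_set_self ha
  have h2 := sigmaStar_set h Δ h1
  have h3 : ((Γ.set ap (α, C)).eraseIdx bp).set aq (α, C') = (Γ.set ap (α, C')).eraseIdx bp := by
    rw [← eraseIdx_set_ne _ hab (by simpa using ha) (by simpa using hb), List.set_set]
  rwa [h3] at h2

private lemma rootStep_sigma_mk {Δ : List ℕ} {Γ : List (ℕ × MTree)} {I J : ℕ}
    {x y : ℕ × MTree} (hx : Γ[I]? = some x) (hy : Γ[J]? = some y) (hIJ : I ≠ J) :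
    RootStep .sigma (.node Δ Γ) (.node Δ ((Γ.set J x).set I y)) := by
  have := RootStep.sigma (Δ := Δ) (Γ := Γ) (i := I + 1) (j := J + 1) (x := x) (y := y)
    (by omega) (by omega) (by omega) (by simpa using hx) (by simpa using hy)
  simpa using this

private lemma swIdx_inj {I J p q : ℕ} (h : p ≠ q) : swIdx I J p ≠ swIdx I J q := by
  unfold swIdx; split_ifs <;> omega

private lemma commute_single :
    ∀ N T T' S r, msize T ≤ N → StepR .sigma T T' → StepR r T' S →
    ∃ S', StepR r T S' ∧ Relation.ReflTransGen (StepR .sigma) S' S := by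
  intro N
  induction N with
  | zero =>
    intro T T' S r hN _ _
    exact absurd hN (by have := msize_pos T; omega)
  | succ N ih =>
    intro T T' S r hN h1 h2
    by_cases hrs : r = .sigma
    · subst hrs; exact ⟨T', h1, .single h2⟩
    obtain ⟨Δ, Γ⟩ := T
    obtain ⟨k1, V1, hpos1, hroot1, hT'⟩ := h1
    cases k1 with
    | nil =>
      rw [show (MTree.node Δ Γ).replace V1 [] = V1 from rfl] at hT'
      rw [show (MTree.node Δ Γ).subtree [] = .node Δ Γ from rfl] at hroot1
      subst hT'
      cases hroot1 with
      | sigma hi hj hij hx hy =>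
        rename_i i j x y
        obtain ⟨I, rfl⟩ : ∃ I, i = I + 1 := ⟨i - 1, by omega⟩
        obtain ⟨J, rfl⟩ : ∃ J, j = J + 1 := ⟨j - 1, by omega⟩
        simp only [Nat.add_sub_cancel] at hx hy h2
        have hIJ : I ≠ J := by omega
        have hI : I < Γ.length := (List.getElem?_eq_some_iff.1 hx).1
        have hJ : J < Γ.length := (List.getElem?_eq_some_iff.1 hy).1
        have hgs : ∀ p, ((Γ.set J x).set I y)[p]? = Γ[swIdx I J p]? := getElem?_swap hx hy hIJ
        have hlen : ((Γ.set J x).set I y).length = Γ.length := by simp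
        have hΓperm : ((Γ.set J x).set I y).Perm Γ := swap_perm hx hy hIJ
        obtain ⟨k2, V2, hpos2, hroot2, hS⟩ := h2
        cases k2 with
        | nil =>
          rw [show (MTree.node Δ ((Γ.set J x).set I y)).replace V2 [] = V2 from rfl] at hS
          rw [show (MTree.node Δ ((Γ.set J x).set I y)).subtree []
            = .node Δ ((Γ.set J x).set I y) from rfl] at hroot2
          subst hS
          cases hroot2 with
          | rhoP hi2 hget2 =>
            rename_i a pa
            exact ⟨.node (pa :: Δ) Γ, stepR_of_root (RootStep.rhoP hi2 hget2),
              .single (stepR_of_root (rootStep_sigma_mk hx hy hIJ))⟩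
          | rhoM hi2 hlt2 =>
            rename_i a
            exact ⟨.node (Δ.eraseIdx (a - 1)) Γ, stepR_of_root (RootStep.rhoM hi2 hlt2),
              .single (stepR_of_root (rootStep_sigma_mk hx hy hIJ))⟩
          | sigma => exact absurd rfl hrs
          | piP hi2 hget2 =>
            rename_i a X
            have hgt : Γ[swIdx I J (a - 1)]? = some X := by rw [← hgs]; exact hget2
            refine ⟨.node Δ (X :: Γ), stepR_of_root (RootStep.piP (i := swIdx I J (a - 1) + 1)
              (by omega) (by simpa using hgt)), ?_⟩
            exact .single (stepR_of_root (rootStep_sigma_cons X (rootStep_sigma_mk hx hy hIJ)))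
          | piM hi2 hlt2 =>
            rename_i a
            have hlt : a - 1 < Γ.length := by omega
            have ht : swIdx I J (a - 1) < Γ.length := swIdx_lt hI hJ hlt
            obtain ⟨X, hX⟩ : ∃ X, Γ[swIdx I J (a - 1)]? = some X :=
              ⟨_, List.getElem?_eq_some_iff.2 ⟨ht, rfl⟩⟩
            refine ⟨.node Δ (Γ.eraseIdx (swIdx I J (a - 1))),
              stepR_of_root (RootStep.piM (i := swIdx I J (a - 1) + 1) (by omega)
                (by simpa using ht)), ?_⟩
            refine sigmaStar_perm ?_ Δ
            exact perm_eraseIdx_of_perm hΓperm.symm hX (by rw [hgs]; exact hX)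
          | four hi2 hj2 hΓ2 hΓt2 =>
            rename_i a b β Δt Γt Sb
            have hgt : Γ[swIdx I J (a - 1)]? = some (β, .node Δt Γt) := by
              rw [← hgs]; exact hΓ2
            have hlt : a - 1 < Γ.length := by
              have := (List.getElem?_eq_some_iff.1 hΓ2).1; omega
            refine ⟨.node Δ (Γ.set (swIdx I J (a - 1)) (β, Sb)),
              stepR_of_root (RootStep.four (i := swIdx I J (a - 1) + 1) (j := b) (by omega) hj2
                (by simpa using hgt) hΓt2), ?_⟩
            exact .single (stepR_of_root (rootStep_swap_set Δ hx hy hIJ (a - 1) hlt (β, Sb)))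
          | lam hi2 hβ2 hΓ2 =>
            rename_i a α β Sa
            have hgt : Γ[swIdx I J (a - 1)]? = some (α, Sa) := by rw [← hgs]; exact hΓ2
            have hlt : a - 1 < Γ.length := by
              have := (List.getElem?_eq_some_iff.1 hΓ2).1; omega
            refine ⟨.node Δ (Γ.set (swIdx I J (a - 1)) (β, Sa)),
              stepR_of_root (RootStep.lam (i := swIdx I J (a - 1) + 1) (by omega) hβ2
                (by simpa using hgt)), ?_⟩
            exact .single (stepR_of_root (rootStep_swap_set Δ hx hy hIJ (a - 1) hlt (β, Sa)))
          | jay hi2 hj2 hab hβ2 hΓa hΓb =>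
            rename_i a b α β Δt Γt Sb
            have hgta : Γ[swIdx I J (a - 1)]? = some (α, .node Δt Γt) := by
              rw [← hgs]; exact hΓa
            have hgtb : Γ[swIdx I J (b - 1)]? = some (β, Sb) := by rw [← hgs]; exact hΓb
            have hlta : a - 1 < Γ.length := by
              have := (List.getElem?_eq_some_iff.1 hΓa).1; omega
            have hltb : b - 1 < Γ.length := by
              have := (List.getElem?_eq_some_iff.1 hΓb).1; omega
            have hab' : a - 1 ≠ b - 1 := by omega
            have ht12 : swIdx I J (a - 1) ≠ swIdx I J (b - 1) := swIdx_inj hab'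
            refine ⟨.node Δ ((Γ.set (swIdx I J (a - 1))
                (α, .node Δt (Γt ++ [(β, Sb)]))).eraseIdx (swIdx I J (b - 1))),
              stepR_of_root (RootStep.jay (i := swIdx I J (a - 1) + 1)
                (j := swIdx I J (b - 1) + 1) (by omega) (by omega) (by omega) hβ2
                (by simpa using hgta) (by simpa using hgtb)), ?_⟩
            refine sigmaStar_perm ?_ Δ
            have hta : swIdx I J (a - 1) < Γ.length := swIdx_lt hI hJ hlta
            have hper1 : (Γ.eraseIdx (swIdx I J (a - 1))).Perm
                (((Γ.set J x).set I y).eraseIdx (a - 1)) :=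
              perm_eraseIdx_of_perm hΓperm.symm hgta hΓa
            have hper2 : (Γ.set (swIdx I J (a - 1)) (α, .node Δt (Γt ++ [(β, Sb)]))).Perm
                (((Γ.set J x).set I y).set (a - 1) (α, .node Δt (Γt ++ [(β, Sb)]))) := by
              refine (perm_set hta _).trans (((hper1.cons _).trans ?_))
              exact (perm_set (by omega) _).symm
            refine perm_eraseIdx_of_perm (x := (β, Sb)) hper2 ?_ ?_
            · rw [List.getElem?_set_ne ht12]; exact hgtb
            · rw [List.getElem?_set_ne (by omega : a - 1 ≠ b - 1)]; exact hΓb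
        | cons n rest2 =>
          obtain ⟨αn, Cn, hn1', hgn, hstep2, hrepl2⟩ := stepR_child hpos2 hroot2
          rw [hrepl2] at hS
          subst hS
          have hgt : Γ[swIdx I J (n - 1)]? = some (αn, Cn) := by rw [← hgs]; exact hgn
          have hlt : n - 1 < Γ.length := by
            have := (List.getElem?_eq_some_iff.1 hgn).1; omega
          exact ⟨.node Δ (Γ.set (swIdx I J (n - 1)) (αn, Cn.replace V2 rest2)),
            stepR_set hstep2 Δ hgt,
            .single (stepR_of_root (rootStep_swap_set Δ hx hy hIJ (n - 1) hlt _))⟩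
    | cons m rest1 =>
      obtain ⟨αm, Cm, hm1, hm, hσc, hrepl⟩ := stepR_child hpos1 hroot1
      rw [hrepl] at hT'
      subst hT'
      have hq : m - 1 < Γ.length := (List.getElem?_eq_some_iff.1 hm).1
      obtain ⟨k2, V2, hpos2, hroot2, hS⟩ := h2
      cases k2 with
      | cons n rest2 =>
        obtain ⟨αn, Cn1, hn1'', hn1, hstep2, hrepl2⟩ := stepR_child hpos2 hroot2
        rw [hrepl2] at hS
        subst hS
        by_cases hqn : n - 1 = m - 1
        · rw [hqn, List.getElem?_set_self hq] at hn1
          simp only [Option.some_inj, Prod.mk.injEq] at hn1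
          obtain ⟨rfl, rfl⟩ := hn1
          have hsz : msize Cm ≤ N := by
            have h2 : msize Cm < msize (MTree.node Δ Γ) := msize_lt hm Δ
            have h3 : msize (MTree.node Δ Γ) ≤ N + 1 := hN
            omega
          obtain ⟨D, hrD, hσD⟩ := ih Cm (Cm.replace V1 rest1)
            ((Cm.replace V1 rest1).replace V2 rest2) r hsz hσc hstep2
          refine ⟨.node Δ (Γ.set (m-1) (αm, D)), stepR_set hrD Δ hm, ?_⟩
          have hset : (Γ.set (m-1) (αm, D))[m-1]? = some (αm, D) :=
            List.getElem?_set_self (by simpa using hq)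
          have hstar := sigmaStar_set hσD Δ hset
          rw [List.set_set] at hstar
          rw [hqn, List.set_set]
          exact hstar
        · have hmn : m - 1 ≠ n - 1 := fun h => hqn h.symm
          have hn : Γ[n-1]? = some (αn, Cn1) := by
            rwa [List.getElem?_set_ne hmn] at hn1
          refine ⟨.node Δ (Γ.set (n-1) (αn, Cn1.replace V2 rest2)), stepR_set hstep2 Δ hn, ?_⟩
          have hval : (Γ.set (n-1) (αn, Cn1.replace V2 rest2))[m-1]? = some (αm, Cm) := by
            rw [List.getElem?_set_ne hmn.symm]; exact hm
          have hstep := stepR_set hσc Δ hval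
          rw [List.set_comm _ _ (l := Γ) hmn.symm] at hstep
          exact .single hstep
      | nil =>
        rw [show (MTree.node Δ (Γ.set (m-1) (αm, Cm.replace V1 rest1))).replace V2 []
          = V2 from rfl] at hS
        rw [show (MTree.node Δ (Γ.set (m-1) (αm, Cm.replace V1 rest1))).subtree []
          = .node Δ (Γ.set (m-1) (αm, Cm.replace V1 rest1)) from rfl] at hroot2
        subst hS
        cases hroot2 with
        | rhoP hi2 hget2 =>
          rename_i a pa
          exact ⟨.node (pa :: Δ) Γ, stepR_of_root (RootStep.rhoP hi2 hget2),
            .single (stepR_set hσc (pa :: Δ) hm)⟩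
        | rhoM hi2 hlt2 =>
          rename_i a
          exact ⟨.node (Δ.eraseIdx (a-1)) Γ, stepR_of_root (RootStep.rhoM hi2 hlt2),
            .single (stepR_set hσc (Δ.eraseIdx (a-1)) hm)⟩
        | sigma => exact absurd rfl hrs
        | piP hi2 hget2 =>
          rename_i a X
          by_cases hcase : a - 1 = m - 1
          · rw [hcase, List.getElem?_set_self hq] at hget2
            obtain rfl : X = (αm, Cm.replace V1 rest1) := (Option.some_inj.mp hget2).symm
            refine ⟨.node Δ ((αm, Cm) :: Γ),
              stepR_of_root (RootStep.piP (i := m) hm1 hm), ?_⟩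
            have s1 : StepR .sigma (.node Δ ((αm, Cm) :: Γ))
                (.node Δ ((αm, Cm.replace V1 rest1) :: Γ)) := by
              have := stepR_set hσc Δ
                (show ((αm, Cm) :: Γ)[0]? = some (αm, Cm) by simp)
              simpa using this
            have s2 : StepR .sigma (.node Δ ((αm, Cm.replace V1 rest1) :: Γ))
                (.node Δ ((αm, Cm.replace V1 rest1) :: Γ.set (m-1) (αm, Cm.replace V1 rest1))) := by
              have := stepR_set hσc Δ
                (show ((αm, Cm.replace V1 rest1) :: Γ)[(m-1)+1]? = some (αm, Cm) by
                  simpa using hm)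
              simpa [List.set_cons_succ] using this
            exact Relation.ReflTransGen.head s1 (.single s2)
          · have hga : Γ[a-1]? = some X := by
              rwa [List.getElem?_set_ne (fun h => hcase h.symm)] at hget2
            refine ⟨.node Δ (X :: Γ), stepR_of_root (RootStep.piP (i := a) hi2 hga), ?_⟩
            have := stepR_set hσc Δ
              (show (X :: Γ)[(m-1)+1]? = some (αm, Cm) by simpa using hm)
            exact .single (by simpa [List.set_cons_succ] using this)
        | piM hi2 hlt2 =>
          rename_i a
          have hlt : a - 1 < Γ.length := by simpa using hlt2
          refine ⟨.node Δ (Γ.eraseIdx (a-1)), stepR_of_root (RootStep.piM hi2 hlt), ?_⟩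
          by_cases hcase : a - 1 = m - 1
          · rw [← hcase, eraseIdx_set_self]
          · have hmn : m - 1 ≠ a - 1 := fun h => hcase h.symm
            have herase := eraseIdx_set_ne Γ hmn hq hlt (αm, Cm.replace V1 rest1)
            set q' := if m - 1 < a - 1 then m - 1 else m - 1 - 1 with hq'
            have hrange : (m-1 < a-1 ∧ q' = m-1) ∨ (a-1 < m-1 ∧ q' = m-1-1) := by
              simp only [hq']; split_ifs <;> omega
            have hval : (Γ.eraseIdx (a-1))[q']? = some (αm, Cm) := by
              rw [List.getElem?_eraseIdx]
              split_ifs with hc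
              · rw [show q' = m-1 by omega]; exact hm
              · rw [show q' + 1 = m-1 by omega]; exact hm
            rw [herase]
            exact .single (stepR_set hσc Δ hval)
        | lam hi2 hβ2 hΓ2 =>
          rename_i a α β Sa
          by_cases hcase : a - 1 = m - 1
          · rw [hcase, List.getElem?_set_self hq] at hΓ2
            simp only [Option.some_inj, Prod.mk.injEq] at hΓ2
            obtain ⟨rfl, rfl⟩ := hΓ2
            refine ⟨.node Δ (Γ.set (m-1) (β, Cm)),
              stepR_of_root (RootStep.lam (i := m) hm1 hβ2 hm), ?_⟩
            rw [hcase, List.set_set]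
            have hval : (Γ.set (m-1) (β, Cm))[m-1]? = some (β, Cm) :=
              List.getElem?_set_self (by simpa using hq)
            exact .single (by simpa [List.set_set] using stepR_set hσc Δ hval)
          · have hga : Γ[a-1]? = some (α, Sa) := by
              rwa [List.getElem?_set_ne (fun h => hcase h.symm)] at hΓ2
            refine ⟨.node Δ (Γ.set (a-1) (β, Sa)),
              stepR_of_root (RootStep.lam (i := a) hi2 hβ2 hga), ?_⟩
            have hval : (Γ.set (a-1) (β, Sa))[m-1]? = some (αm, Cm) := by
              rw [List.getElem?_set_ne hcase]; exact hm
            have hstep := stepR_set hσc Δ hval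
            rw [List.set_comm _ _ (l := Γ) hcase] at hstep
            exact .single hstep
        | four hi2 hj2 hΓ2 hΓt2 =>
          rename_i a b β Δt Γt Sb
          by_cases hcase : a - 1 = m - 1
          · rw [hcase, List.getElem?_set_self hq] at hΓ2
            simp only [Option.some_inj, Prod.mk.injEq] at hΓ2
            obtain ⟨rfl, hCm'⟩ := hΓ2
            obtain ⟨k0, V0, hpos0, hroot0, hCeq⟩ := hσc
            obtain ⟨Δc, Γc⟩ := Cm
            cases k0 with
            | nil =>
              rw [show (MTree.node Δc Γc).replace V0 [] = V0 from rfl] at hCeq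
              rw [show (MTree.node Δc Γc).subtree [] = .node Δc Γc from rfl] at hroot0
              cases hroot0 with
              | sigma hu hv huv hxu hyv =>
                rename_i u v xu yv
                obtain ⟨U, rfl⟩ : ∃ U, u = U + 1 := ⟨u - 1, by omega⟩
                obtain ⟨W, rfl⟩ : ∃ W, v = W + 1 := ⟨v - 1, by omega⟩
                simp only [Nat.add_sub_cancel] at hxu hyv hCeq
                rw [hCeq] at hCm'
                have hUW : U ≠ W := by omega
                injection hCm' with hΔ hΓt'
                subst hΔ
                subst hΓt'
                have hgb : Γc[swIdx U W (b-1)]? = some (αm, Sb) := by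
                  rw [← getElem?_swap hxu hyv hUW]; exact hΓt2
                refine ⟨.node Δ (Γ.set (m-1) (αm, Sb)),
                  stepR_of_root (RootStep.four (i := m) (j := swIdx U W (b-1) + 1) hm1
                    (by omega) hm (by simpa using hgb)), ?_⟩
                rw [hcase, List.set_set]
            | cons w rest0 =>
              obtain ⟨αw, Cw, hw1, hw, hσw, hrepl0⟩ := stepR_child hpos0 hroot0
              rw [hrepl0] at hCeq
              rw [hCeq] at hCm'
              injection hCm' with hΔ hΓt'
              subst hΔ
              subst hΓt'
              have hwq : w - 1 < Γc.length := (List.getElem?_eq_some_iff.1 hw).1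
              by_cases hbw : b - 1 = w - 1
              · rw [hbw, List.getElem?_set_self hwq] at hΓt2
                simp only [Option.some_inj, Prod.mk.injEq] at hΓt2
                obtain ⟨rfl, rfl⟩ := hΓt2
                refine ⟨.node Δ (Γ.set (m-1) (αw, Cw)),
                  stepR_of_root (RootStep.four (i := m) (j := b) hm1 hj2 hm
                    (by rw [hbw]; exact hw)), ?_⟩
                rw [hcase, List.set_set]
                have hval : (Γ.set (m-1) (αw, Cw))[m-1]? = some (αw, Cw) :=
                  List.getElem?_set_self (by simpa using hq)
                exact .single (by simpa [List.set_set] using stepR_set hσw Δ hval)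
              · have hgb : Γc[b-1]? = some (αm, Sb) := by
                  rwa [List.getElem?_set_ne (fun h => hbw h.symm)] at hΓt2
                refine ⟨.node Δ (Γ.set (m-1) (αm, Sb)),
                  stepR_of_root (RootStep.four (i := m) (j := b) hm1 hj2 hm hgb), ?_⟩
                rw [hcase, List.set_set]
          · have hga : Γ[a-1]? = some (β, .node Δt Γt) := by
              rwa [List.getElem?_set_ne (fun h => hcase h.symm)] at hΓ2
            refine ⟨.node Δ (Γ.set (a-1) (β, Sb)),
              stepR_of_root (RootStep.four hi2 hj2 hga hΓt2), ?_⟩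
            have hval : (Γ.set (a-1) (β, Sb))[m-1]? = some (αm, Cm) := by
              rw [List.getElem?_set_ne hcase]; exact hm
            have hstep := stepR_set hσc Δ hval
            rw [List.set_comm _ _ (l := Γ) hcase] at hstep
            exact .single hstep
        | jay hi2 hj2 hab hβ2 hΓa hΓb =>
          rename_i a b α β Δt Γt Sb
          have hab' : a - 1 ≠ b - 1 := by omega
          have ha1 : a - 1 < Γ.length := by
            have := (List.getElem?_eq_some_iff.1 hΓa).1; simpa using this
          have hb1 : b - 1 < Γ.length := by
            have := (List.getElem?_eq_some_iff.1 hΓb).1; simpa using this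
          by_cases hcaseB : b - 1 = m - 1
          · have hcaseA : a - 1 ≠ m - 1 := by omega
            rw [hcaseB, List.getElem?_set_self hq] at hΓb
            simp only [Option.some_inj, Prod.mk.injEq] at hΓb
            obtain ⟨rfl, rfl⟩ := hΓb
            have hga : Γ[a-1]? = some (α, .node Δt Γt) := by
              rwa [List.getElem?_set_ne (fun h => hcaseA h.symm)] at hΓa
            have hgb : Γ[b-1]? = some (αm, Cm) := by rw [hcaseB]; exact hm
            refine ⟨.node Δ ((Γ.set (a-1) (α, .node Δt (Γt ++ [(αm, Cm)]))).eraseIdx (b-1)),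
              stepR_of_root (RootStep.jay hi2 hj2 hab hβ2 hga hgb), ?_⟩
            have hin := stepR_set hσc Δt (List.getElem?_concat_length (l := Γt) (a := (αm, Cm)))
            have hconc : (Γt ++ [(αm, Cm)]).set Γt.length (αm, Cm.replace V1 rest1)
                = Γt ++ [(αm, Cm.replace V1 rest1)] := by
              rw [List.set_append]; simp
            rw [hconc] at hin
            have hout := sigmaStar_set_eraseIdx (Δ := Δ) hab' ha1 hb1
              (α := α) (.single hin)
            have hgoal : ((Γ.set (m-1) (αm, Cm.replace V1 rest1)).set (a-1)
                  (α, .node Δt (Γt ++ [(αm, Cm.replace V1 rest1)]))).eraseIdx (b-1)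
                = (Γ.set (a-1) (α, .node Δt (Γt ++ [(αm, Cm.replace V1 rest1)]))).eraseIdx (b-1) := by
              rw [List.set_comm _ _ (l := Γ) (fun h => hcaseA h.symm), ← hcaseB, eraseIdx_set_self]
            rw [hgoal]
            exact hout
          · by_cases hcaseA : a - 1 = m - 1
            · rw [hcaseA, List.getElem?_set_self hq] at hΓa
              simp only [Option.some_inj, Prod.mk.injEq] at hΓa
              obtain ⟨rfl, hCm'⟩ := hΓa
              have hgb : Γ[b-1]? = some (β, Sb) := by
                rwa [List.getElem?_set_ne (fun h => hcaseB h.symm)] at hΓb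
              have hmb : m ≠ b := by omega
              obtain ⟨k0, V0, hpos0, hroot0, hCeq⟩ := hσc
              obtain ⟨Δc, Γc⟩ := Cm
              cases k0 with
              | nil =>
                rw [show (MTree.node Δc Γc).replace V0 [] = V0 from rfl] at hCeq
                rw [show (MTree.node Δc Γc).subtree [] = .node Δc Γc from rfl] at hroot0
                cases hroot0 with
                | sigma hu hv huv hxu hyv =>
                  rename_i u v xu yv
                  obtain ⟨U, rfl⟩ : ∃ U, u = U + 1 := ⟨u - 1, by omega⟩
                  obtain ⟨W, rfl⟩ : ∃ W, v = W + 1 := ⟨v - 1, by omega⟩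
                  simp only [Nat.add_sub_cancel] at hxu hyv hCeq
                  rw [hCeq] at hCm'
                  have hUW : U ≠ W := by omega
                  injection hCm' with hΔ hΓt'
                  subst hΔ
                  subst hΓt'
                  refine ⟨.node Δ ((Γ.set (m-1)
                      (αm, .node Δc (Γc ++ [(β, Sb)]))).eraseIdx (b-1)),
                    stepR_of_root (RootStep.jay (i := m) (j := b) hm1 hj2 hmb hβ2 hm hgb), ?_⟩
                  have hin : Relation.ReflTransGen (StepR .sigma)
                      (.node Δc (Γc ++ [(β, Sb)]))
                      (.node Δc (((Γc.set W xu).set U yv) ++ [(β, Sb)])) :=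
                    sigmaStar_perm ((swap_perm hxu hyv hUW).symm.append_right [(β, Sb)]) Δc
                  have hout := sigmaStar_set_eraseIdx (Δ := Δ)
                    (show m - 1 ≠ b - 1 from fun h => hcaseB h.symm) hq hb1 (α := αm) hin
                  rw [hcaseA, List.set_set]
                  exact hout
              | cons w rest0 =>
                obtain ⟨αw, Cw, hw1, hw, hσw, hrepl0⟩ := stepR_child hpos0 hroot0
                rw [hrepl0] at hCeq
                rw [hCeq] at hCm'
                injection hCm' with hΔ hΓt'
                subst hΔ
                subst hΓt'
                have hwq : w - 1 < Γc.length := (List.getElem?_eq_some_iff.1 hw).1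
                refine ⟨.node Δ ((Γ.set (m-1)
                    (αm, .node Δc (Γc ++ [(β, Sb)]))).eraseIdx (b-1)),
                  stepR_of_root (RootStep.jay (i := m) (j := b) hm1 hj2 hmb hβ2 hm hgb), ?_⟩
                have hget : (Γc ++ [(β, Sb)])[w-1]? = some (αw, Cw) := by
                  rw [List.getElem?_append]
                  simp only [if_pos hwq]
                  exact hw
                have hin := stepR_set hσw Δc hget
                have hconc : (Γc ++ [(β, Sb)]).set (w-1) (αw, Cw.replace V0 rest0)
                    = Γc.set (w-1) (αw, Cw.replace V0 rest0) ++ [(β, Sb)] := by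
                  rw [List.set_append, if_pos hwq]
                rw [hconc] at hin
                have hout := sigmaStar_set_eraseIdx (Δ := Δ)
                  (show m - 1 ≠ b - 1 from fun h => hcaseB h.symm) hq hb1 (α := αm)
                  (.single hin)
                rw [hcaseA, List.set_set]
                exact hout
            · have hga : Γ[a-1]? = some (α, .node Δt Γt) := by
                rwa [List.getElem?_set_ne (fun h => hcaseA h.symm)] at hΓa
              have hgb : Γ[b-1]? = some (β, Sb) := by
                rwa [List.getElem?_set_ne (fun h => hcaseB h.symm)] at hΓb
              refine ⟨.node Δ ((Γ.set (a-1)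
                  (α, .node Δt (Γt ++ [(β, Sb)]))).eraseIdx (b-1)),
                stepR_of_root (RootStep.jay hi2 hj2 hab hβ2 hga hgb), ?_⟩
              have hmb' : m - 1 ≠ b - 1 := fun h => hcaseB h.symm
              have hma' : m - 1 ≠ a - 1 := fun h => hcaseA h.symm
              set X1 := (α, MTree.node Δt (Γt ++ [(β, Sb)])) with hX1
              have herase := eraseIdx_set_ne (Γ.set (a-1) X1) hmb'
                (by simpa using hq) (by simpa using hb1) (αm, Cm.replace V1 rest1)
              set q' := if m - 1 < b - 1 then m - 1 else m - 1 - 1 with hq'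
              have hrange : (m-1 < b-1 ∧ q' = m-1) ∨ (b-1 < m-1 ∧ q' = m-1-1) := by
                simp only [hq']; split_ifs <;> omega
              have hval : ((Γ.set (a-1) X1).eraseIdx (b-1))[q']? = some (αm, Cm) := by
                rw [List.getElem?_eraseIdx]
                split_ifs with hc
                · rw [show q' = m-1 by omega, List.getElem?_set_ne hcaseA]; exact hm
                · rw [show q' + 1 = m-1 by omega, List.getElem?_set_ne hcaseA]; exact hm
              have hstep := stepR_set hσc Δ hval
              rw [← herase, List.set_comm _ _ (l := Γ) (fun h => hma' h.symm)] at hstep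
              exact .single hstep



private lemma commute_star {T U : MTree} (h : Relation.ReflTransGen (StepR .sigma) T U)
    {r : Rule} {S : MTree} (h2 : StepR r U S) :
    ∃ S', StepR r T S' ∧ Relation.ReflTransGen (StepR .sigma) S' S := by
  induction h using Relation.ReflTransGen.head_induction_on with
  | refl => exact ⟨S, h2, .refl⟩
  | head hab _ ih =>
    obtain ⟨S1, hS1, hσ1⟩ := ih
    obtain ⟨S2, hS2, hσ2⟩ := commute_single (msize _) _ _ _ _ le_rfl hab hS1
    exact ⟨S2, hS2, hσ2.trans hσ1⟩

private lemma commute_stepsOf {Ω : List Rule} {U S : MTree} (h : StepsOf Ω U S) :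
    ∀ {T : MTree}, Relation.ReflTransGen (StepR .sigma) T U →
      ∃ V, StepsOf Ω T V ∧ Relation.ReflTransGen (StepR .sigma) V S := by
  induction h with
  | nil W => exact fun hσ => ⟨_, .nil _, hσ⟩
  | cons hstep _ ih =>
    intro T hσ
    obtain ⟨W, hW, hσW⟩ := commute_star hσ hstep
    obtain ⟨V, hV, hσV⟩ := ih hσW
    exact ⟨V, .cons hW hV, hσV⟩

end TRC

/-- finitely many `σ`-steps followed by a `σ`-free list `Ω` of rules
can be replaced by `Ω` followed by finitely many `σ`-steps. -/
theorem sigma_star_permutation (Ω : List TRC.Rule) (hΩ : ∀ r ∈ Ω, r ≠ TRC.Rule.sigma)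
    (T S : TRC.MTree)
    (h : ∃ U, Relation.ReflTransGen (TRC.StepR .sigma) T U ∧ TRC.StepsOf Ω U S) :
    ∃ U, TRC.StepsOf Ω T U ∧ Relation.ReflTransGen (TRC.StepR .sigma) U S := by
  obtain ⟨U, hσ, hΩ⟩ := h
  exact TRC.commute_stepsOf hΩ hσ
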